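/- Let H be a (k,l)-edge-maximal r-uniform hypergraph with n = |V(H)| ≥ l ≥ t+1 and k, r ≥ 2, where t is the largest integer with C(t-1,r-1) ≤ k. If X is a nonempty proper subset of V(H) achieving the minimum edge-cut (κ'(H) = |E_H(X)|), then there exists an r-subset of V(H) not in E(H) intersecting both X and V(H)\X, and moreover κ'(H) = k. -/

import Mathlib

/-- The set of edges of `E` crossing the cut `(X, S \ X)` inside ground set `S`. -/
def cutEdges {V : Type*} [DecidableEq V] (E : Finset (Finset V)) (S X : Finset V) :
    Finset (Finset V) :=
  E.filter fun e => (e ∩ X).Nonempty ∧ (e ∩ (S \ X)).Nonempty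

/-- `E` is the edge set of a `(k,l)`-edge-maximal `r`-uniform hypergraph on vertex set `W`:
every subhypergraph on at least `l` vertices has edge-connectivity at most `k`, and
adding any missing `r`-subset of `W` creates a subhypergraph on at least `l` vertices
with edge-connectivity at least `k + 1`. -/
def IsKLEdgeMaximal {V : Type*} [DecidableEq V] (r k l : ℕ) (W : Finset V)
    (E : Finset (Finset V)) : Prop :=
  (∀ e ∈ E, e.card = r ∧ e ⊆ W) ∧
  (∀ S ⊆ W, ∀ E' ⊆ E, (∀ e ∈ E', e ⊆ S) → l ≤ S.card →
    ∃ X ⊆ S, X.Nonempty ∧ (S \ X).Nonempty ∧ (cutEdges E' S X).card ≤ k) ∧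
  (∀ e : Finset V, e ⊆ W → e.card = r → e ∉ E →
    ∃ S ⊆ W, ∃ E' ⊆ insert e E, (∀ f ∈ E', f ⊆ S) ∧ l ≤ S.card ∧
      ∀ X ⊆ S, X.Nonempty → (S \ X).Nonempty → k + 1 ≤ (cutEdges E' S X).card)

theorem stmt_13 (n k l r t : ℕ) (hk : 2 ≤ k) (hr : 2 ≤ r)
    (ht1 : (t - 1).choose (r - 1) ≤ k) (ht2 : k < t.choose (r - 1))
    (hl : t + 1 ≤ l) (hln : l ≤ n)
    (E : Finset (Finset (Fin n)))
    (hmax : IsKLEdgeMaximal r k l Finset.univ E)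
    (X : Finset (Fin n)) (hXne : X.Nonempty) (hXprop : X ≠ Finset.univ)
    (hmin : ∀ Y : Finset (Fin n), Y.Nonempty → Y ≠ Finset.univ →
      (cutEdges E Finset.univ X).card ≤ (cutEdges E Finset.univ Y).card) :
    (∃ e : Finset (Fin n), e.card = r ∧ e ∉ E ∧
        (e ∩ X).Nonempty ∧ (e ∩ (Finset.univ \ X)).Nonempty) ∧
      (cutEdges E Finset.univ X).card = k := by
  obtain ⟨hE1, hE2, hE3⟩ := hmax
  obtain ⟨X₀, hX₀sub, hX₀ne, hX₀ne', hX₀cut⟩ :=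
    hE2 Finset.univ (le_refl _) E (le_refl _) (fun e he => (hE1 e he).2)
      (by simpa using hln)
  have hX₀univ : X₀ ≠ Finset.univ := by
    intro h; rw [h] at hX₀ne'; simp at hX₀ne'
  have hXk : (cutEdges E Finset.univ X).card ≤ k :=
    le_trans (hmin X₀ hX₀ne hX₀univ) hX₀cut
  have htn : t ≤ n - 1 := by omega
  have hkchoose : k < (n - 1).choose (r - 1) :=
    lt_of_lt_of_le ht2 (Nat.choose_le_choose _ htn)
  obtain ⟨u, hu⟩ := hXne
  have hXc : (Finset.univ \ X).Nonempty := by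
    rw [Finset.sdiff_nonempty]
    intro h
    exact hXprop (Finset.univ_subset_iff.mp h)
  obtain ⟨w, hw⟩ := hXc
  have hwX : w ∉ X := (Finset.mem_sdiff.mp hw).2
  have huw : u ≠ w := fun h => hwX (h ▸ hu)
  -- Part 1: exists missing crossing r-set
  have hmiss : ∃ e : Finset (Fin n), e.card = r ∧ e ∉ E ∧
      (e ∩ X).Nonempty ∧ (e ∩ (Finset.univ \ X)).Nonempty := by
    by_contra hcon
    push_neg at hcon
    have hall : ∀ e : Finset (Fin n), e.card = r → (e ∩ X).Nonempty →
        (e ∩ (Finset.univ \ X)).Nonempty → e ∈ E := by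
      intro e h1 h2 h3
      by_contra he
      exact h3.ne_empty (hcon e h1 he h2)
    -- injection from (r-1)-subsets of univ \ {u} into the cut
    set F := (Finset.univ \ {u} : Finset (Fin n)).powersetCard (r - 1) with hF
    have hFcard : F.card = (n - 1).choose (r - 1) := by
      rw [hF, Finset.card_powersetCard]
      congr 1
      rw [Finset.card_sdiff_of_subset (by simp)]
      simp
    set φ : Finset (Fin n) → Finset (Fin n) :=
      fun s => if (s ∩ (Finset.univ \ X)).Nonempty then insert u s else insert w s
      with hφ
    have hmem : ∀ s ∈ F, φ s ∈ cutEdges E Finset.univ X := by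
      intro s hs
      rw [hF, Finset.mem_powersetCard] at hs
      obtain ⟨hssub, hscard⟩ := hs
      have hus : u ∉ s := fun h => by simpa using (hssub h)
      by_cases hcase : (s ∩ (Finset.univ \ X)).Nonempty
      · have he : φ s = insert u s := by rw [hφ]; simp [hcase]
        rw [he]
        have hcard : (insert u s).card = r := by
          rw [Finset.card_insert_of_notMem hus, hscard]; omega
        have h2 : ((insert u s) ∩ X).Nonempty :=
          ⟨u, Finset.mem_inter.mpr ⟨Finset.mem_insert_self _ _, hu⟩⟩
        have h3 : ((insert u s) ∩ (Finset.univ \ X)).Nonempty := by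
          obtain ⟨z, hz⟩ := hcase
          exact ⟨z, Finset.mem_inter.mpr ⟨Finset.mem_insert_of_mem
            (Finset.mem_inter.mp hz).1, (Finset.mem_inter.mp hz).2⟩⟩
        exact Finset.mem_filter.mpr ⟨hall _ hcard h2 h3, h2, h3⟩
      · have he : φ s = insert w s := by rw [hφ]; simp [hcase]
        have hsX : s ⊆ X := by
          intro z hz
          by_contra hzX
          exact hcase ⟨z, Finset.mem_inter.mpr ⟨hz, by simp [hzX]⟩⟩
        have hws : w ∉ s := fun h => hwX (hsX h)
        rw [he]
        have hcard : (insert w s).card = r := by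
          rw [Finset.card_insert_of_notMem hws, hscard]; omega
        have hsne : s.Nonempty := by
          rw [← Finset.card_pos, hscard]; omega
        obtain ⟨z, hz⟩ := hsne
        have h2 : ((insert w s) ∩ X).Nonempty :=
          ⟨z, Finset.mem_inter.mpr ⟨Finset.mem_insert_of_mem hz, hsX hz⟩⟩
        have h3 : ((insert w s) ∩ (Finset.univ \ X)).Nonempty :=
          ⟨w, Finset.mem_inter.mpr ⟨Finset.mem_insert_self _ _, hw⟩⟩
        exact Finset.mem_filter.mpr ⟨hall _ hcard h2 h3, h2, h3⟩
    have hinj : Set.InjOn φ F := by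
      intro s₁ hs₁ s₂ hs₂ heq
      simp only [Finset.coe_mem, Finset.mem_coe, hF, Finset.mem_powersetCard] at hs₁ hs₂
      have hus₁ : u ∉ s₁ := fun h => by simpa using (hs₁.1 h)
      have hus₂ : u ∉ s₂ := fun h => by simpa using (hs₂.1 h)
      by_cases hc₁ : (s₁ ∩ (Finset.univ \ X)).Nonempty <;>
        by_cases hc₂ : (s₂ ∩ (Finset.univ \ X)).Nonempty
      · rw [hφ] at heq; simp only [if_pos hc₁, if_pos hc₂] at heq
        have := congrArg (fun T => Finset.erase T u) heq
        simpa [Finset.erase_insert hus₁, Finset.erase_insert hus₂] using this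
      · exfalso
        rw [hφ] at heq; simp only [if_pos hc₁, if_neg hc₂] at heq
        have hws₂ : w ∉ s₂ := by
          intro h
          have hsX : s₂ ⊆ X := by
            intro z hz
            by_contra hzX
            exact hc₂ ⟨z, Finset.mem_inter.mpr ⟨hz, by simp [hzX]⟩⟩
          exact hwX (hsX h)
        have : u ∈ insert w s₂ := heq ▸ Finset.mem_insert_self u s₁
        rcases Finset.mem_insert.mp this with h | h
        · exact huw h
        · exact hus₂ h
      · exfalso
        rw [hφ] at heq; simp only [if_neg hc₁, if_pos hc₂] at heq
        have : u ∈ insert w s₁ := heq ▸ Finset.mem_insert_self u s₂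
        rcases Finset.mem_insert.mp this with h | h
        · exact huw h
        · exact hus₁ h
      · rw [hφ] at heq; simp only [if_neg hc₁, if_neg hc₂] at heq
        have hws₁ : w ∉ s₁ := by
          intro h
          have hsX : s₁ ⊆ X := by
            intro z hz; by_contra hzX
            exact hc₁ ⟨z, Finset.mem_inter.mpr ⟨hz, by simp [hzX]⟩⟩
          exact hwX (hsX h)
        have hws₂ : w ∉ s₂ := by
          intro h
          have hsX : s₂ ⊆ X := by
            intro z hz; by_contra hzX
            exact hc₂ ⟨z, Finset.mem_inter.mpr ⟨hz, by simp [hzX]⟩⟩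
          exact hwX (hsX h)
        have := congrArg (fun T => Finset.erase T w) heq
        simpa [Finset.erase_insert hws₁, Finset.erase_insert hws₂] using this
    have hle : F.card ≤ (cutEdges E Finset.univ X).card :=
      Finset.card_le_card_of_injOn φ hmem hinj
    rw [hFcard] at hle
    omega
  refine ⟨hmiss, ?_⟩
  -- Part 2: cut(X) = k
  obtain ⟨e, hecard, heE, heX, heXc⟩ := hmiss
  obtain ⟨S, hSW, E', hE'sub, hE'S, hlS, hcut⟩ :=
    hE3 e (Finset.subset_univ _) hecard heE
  by_cases heE' : e ∈ E'
  · -- e ∈ E', so X ∩ S and S \ X are nonempty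
    have heS : e ⊆ S := hE'S e heE'
    have h1 : (X ∩ S).Nonempty := by
      obtain ⟨x, hx⟩ := heX
      rw [Finset.mem_inter] at hx
      exact ⟨x, Finset.mem_inter.mpr ⟨hx.2, heS hx.1⟩⟩
    have h2 : (S \ (X ∩ S)).Nonempty := by
      obtain ⟨y, hy⟩ := heXc
      rw [Finset.mem_inter, Finset.mem_sdiff] at hy
      exact ⟨y, Finset.mem_sdiff.mpr ⟨heS hy.1, fun h =>
        hy.2.2 (Finset.mem_inter.mp h).1⟩⟩
    have hk1 := hcut (X ∩ S) Finset.inter_subset_right h1 h2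
    have hsub : cutEdges E' S (X ∩ S) ⊆ insert e (cutEdges E Finset.univ X) := by
      intro f hf
      rw [cutEdges, Finset.mem_filter] at hf
      obtain ⟨hfE', hf1, hf2⟩ := hf
      rcases Finset.mem_insert.mp (hE'sub hfE') with h | h
      · exact Finset.mem_insert.mpr (Or.inl h)
      · refine Finset.mem_insert.mpr (Or.inr ?_)
        rw [cutEdges, Finset.mem_filter]
        refine ⟨h, ?_, ?_⟩
        · obtain ⟨z, hz⟩ := hf1
          rw [Finset.mem_inter, Finset.mem_inter] at hz
          exact ⟨z, Finset.mem_inter.mpr ⟨hz.1, hz.2.1⟩⟩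
        · obtain ⟨z, hz⟩ := hf2
          rw [Finset.mem_inter, Finset.mem_sdiff] at hz
          refine ⟨z, Finset.mem_inter.mpr ⟨hz.1, Finset.mem_sdiff.mpr
            ⟨Finset.mem_univ _, fun hzX => hz.2.2 (Finset.mem_inter.mpr ⟨hzX, hz.2.1⟩)⟩⟩⟩
      done
    have hle : (cutEdges E' S (X ∩ S)).card ≤ (cutEdges E Finset.univ X).card + 1 :=
      le_trans (Finset.card_le_card hsub) (Finset.card_insert_le _ _)
    omega
  · -- e ∉ E', so E' ⊆ E, contradiction with property 2
    exfalso
    have hE'E : E' ⊆ E := by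
      intro f hf
      rcases Finset.mem_insert.mp (hE'sub hf) with h | h
      · exact absurd (h ▸ hf) heE'
      · exact h
    obtain ⟨Y, hYsub, hYne, hYne', hYcut⟩ := hE2 S hSW E' hE'E hE'S hlS
    have := hcut Y hYsub hYne hYne'
    omega
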